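/- Let v_1, …, v_{n+1} be affinely independent points in Euclidean space ℝ^n (n ≥ 2). Let Q be the n×n Gram matrix with entries Q_{ij} = ⟨v_i − v_{n+1}, v_j − v_{n+1}⟩ for 1 ≤ i, j ≤ n, and let Q_{ij} denote its ij-th minor (the determinant of the matrix obtained by deleting row i and column j of Q). Then the orthogonal projection p of v_{n+1} onto the affine span of {v_1, …, v_n} is p = Σ_{i=1}^n α_i v_i with α_i = ( Σ_{j=1}^n (−1)^{i+j} Q_{ij} ) / ( Σ_{j=1}^n Σ_{k=1}^n (−1)^{j+k} Q_{jk} ). -/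

import Mathlib

open Finset Matrix
open scoped RealInnerProductSpace

theorem aux_orth {F : Type*} [NormedAddCommGroup F] [InnerProductSpace ℝ F]
    (S : AffineSubspace ℝ F) (p u : F) (hp : p ∈ S)
    (hmin : ∀ q ∈ S, dist u p ≤ dist u q) :
    ∀ q ∈ S, ⟪u - p, q - p⟫ = 0 := by
  have h0 : (0 : F) ∈ S.direction := zero_mem _
  have hiInf : ‖(u - p) - 0‖ = ⨅ x : S.direction, ‖(u - p) - x‖ := by
    apply le_antisymm
    · apply le_ciInf
      intro x
      rw [sub_zero]
      have hx : (x : F) +ᵥ p ∈ S := AffineSubspace.vadd_mem_of_mem_direction x.2 hp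
      calc ‖u - p‖ = dist u p := (dist_eq_norm _ _).symm
        _ ≤ dist u ((x : F) +ᵥ p) := hmin _ hx
        _ = ‖(u - p) - (x : F)‖ := by
            rw [dist_eq_norm, vadd_eq_add]; congr 1; abel
    · exact ciInf_le (f := fun x : S.direction => ‖(u - p) - (x : F)‖) ⟨0, by rintro y ⟨x, rfl⟩; exact norm_nonneg _⟩ ⟨0, h0⟩
  have hkey := (Submodule.norm_eq_iInf_iff_real_inner_eq_zero S.direction h0).1 hiInf
  intro q hq
  have hqp : q - p ∈ S.direction := by
    have := AffineSubspace.vsub_mem_direction hq hp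
    simpa using this
  simpa using hkey _ hqp

set_option maxHeartbeats 1000000 in
/-- **Orthogonal projection in Euclidean simplices (intrinsic form).**
For affinely independent points `v 1, …, v (n+1)` in `ℝ^n` (`n ≥ 2`, here
`n` is `m + 2`), with `Q` the Gram matrix of the edge vectors from the last
vertex, the orthogonal projection `p` of the last vertex onto the affine
span of the other vertices is `p = ∑ i, α i • v i` with
`α i = (∑ j, (−1)^(i+j) Q_{ij}) / (∑ j ∑ k, (−1)^(j+k) Q_{jk})`,
where `Q_{ij}` is the `ij`-th minor of `Q`. -/
theorem euclidean_projection_normalized (m : ℕ)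
    (v : Fin (m + 3) → EuclideanSpace ℝ (Fin (m + 2)))
    (hv : AffineIndependent ℝ v)
    (Q : Matrix (Fin (m + 2)) (Fin (m + 2)) ℝ)
    (hQ : ∀ i j, Q i j =
      ⟪v i.castSucc - v (Fin.last (m + 2)), v j.castSucc - v (Fin.last (m + 2))⟫)
    (p : EuclideanSpace ℝ (Fin (m + 2)))
    (hp : p ∈ affineSpan ℝ (Set.range fun i : Fin (m + 2) => v i.castSucc))
    (hmin : ∀ q ∈ affineSpan ℝ (Set.range fun i : Fin (m + 2) => v i.castSucc),
      dist (v (Fin.last (m + 2))) p ≤ dist (v (Fin.last (m + 2))) q)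
    (α : Fin (m + 2) → ℝ)
    (hα : ∀ i, α i =
      (∑ j : Fin (m + 2), (-1 : ℝ) ^ ((i : ℕ) + (j : ℕ)) *
        (Q.submatrix i.succAbove j.succAbove).det) /
      (∑ j : Fin (m + 2), ∑ k : Fin (m + 2), (-1 : ℝ) ^ ((j : ℕ) + (k : ℕ)) *
        (Q.submatrix j.succAbove k.succAbove).det)) :
    p = ∑ i : Fin (m + 2), α i • v i.castSucc := by
  classical
  set L : Fin (m + 3) := Fin.last (m + 2) with hL
  set e : Fin (m + 2) → EuclideanSpace ℝ (Fin (m + 2)) :=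
    fun i => v i.castSucc - v L with he
  set S := affineSpan ℝ (Set.range fun i : Fin (m + 2) => v i.castSucc) with hS
  -- barycentric coordinates of p
  obtain ⟨w, hw1, hpw⟩ := eq_affineCombination_of_mem_affineSpan_of_fintype hp
  have hpsum : p = ∑ i, w i • v i.castSucc := by
    rw [hpw, Finset.affineCombination_eq_linear_combination _ _ _ hw1]
  -- orthogonality
  have horth : ∀ q ∈ S, ⟪v L - p, q - p⟫ = 0 := aux_orth S p (v L) hp hmin
  have horth2 : ∀ i j : Fin (m + 2), ⟪v L - p, v i.castSucc - v j.castSucc⟫ = 0 := by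
    intro i j
    have hi := horth _ (subset_affineSpan ℝ _ (Set.mem_range_self i))
    have hj := horth _ (subset_affineSpan ℝ _ (Set.mem_range_self j))
    have h : ⟪v L - p, (v i.castSucc - p) - (v j.castSucc - p)⟫ = 0 := by
      rw [inner_sub_right, hi, hj, sub_zero]
    simpa [sub_sub_sub_cancel_right] using h
  -- p - v L as combination of e
  have hsum : ∑ i, w i • e i = p - v L := by
    have h : ∑ i, w i • e i = (∑ i, w i • v i.castSucc) - (∑ i, w i) • v L := by
      simp [he, smul_sub, Finset.sum_sub_distrib, Finset.sum_smul]
    rw [h, hw1, one_smul, ← hpsum]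
  -- Q *ᵥ w
  have hQw : ∀ i, (Q *ᵥ w) i = ⟪e i, p - v L⟫ := by
    intro i
    rw [← hsum, inner_sum]
    simp only [real_inner_smul_right]
    simp [Matrix.mulVec, dotProduct, hQ, he, mul_comm]
  have hconst : ∀ i j : Fin (m + 2), (Q *ᵥ w) i = (Q *ᵥ w) j := by
    intro i j
    rw [hQw, hQw, ← sub_eq_zero, ← inner_sub_left]
    have h : e i - e j = v i.castSucc - v j.castSucc := by
      simp [he, sub_sub_sub_cancel_right]
    rw [h, real_inner_comm, show p - v L = -(v L - p) by abel, inner_neg_left,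
      horth2 i j, neg_zero]
  set c : ℝ := (Q *ᵥ w) 0 with hc
  have hQwc : Q *ᵥ w = fun _ => c := funext fun i => hconst i 0
  -- linear independence of e
  have hli : LinearIndependent ℝ e := by
    have h := (affineIndependent_iff_linearIndependent_vsub ℝ v L).1 hv
    have h2 := h.comp
      (fun i : Fin (m + 2) => (⟨i.castSucc, (Fin.castSucc_lt_last i).ne⟩ : {x // x ≠ L}))
      (fun a b hab => Fin.castSucc_injective _ (congrArg Subtype.val hab))
    convert h2 using 1
    rfl
    rfl
  -- det Q ≠ 0
  have hdet : Q.det ≠ 0 := by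
    intro hd
    obtain ⟨x, hx0, hxQ⟩ := (Matrix.exists_mulVec_eq_zero_iff).2 hd
    have hz : ∑ i, x i • e i = 0 := by
      have hinner : ⟪∑ i, x i • e i, ∑ j, x j • e j⟫ = 0 := by
        rw [sum_inner]
        refine Finset.sum_eq_zero fun i _ => ?_
        rw [real_inner_smul_left, inner_sum]
        have : ∑ j, ⟪e i, x j • e j⟫ = (Q *ᵥ x) i := by
          simp only [real_inner_smul_right]
          simp [Matrix.mulVec, dotProduct, hQ, he, mul_comm]
        rw [this, hxQ]
        simp
      exact inner_self_eq_zero.1 hinner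
    exact hx0 (funext fun i => Fintype.linearIndependent_iff.1 hli x hz i)
  -- the adjugate vector
  set u : Fin (m + 2) → ℝ := Q.adjugate *ᵥ (fun _ => 1) with hu
  have hQsymm : Qᵀ = Q := Matrix.ext fun i j => by
    rw [Matrix.transpose_apply, hQ, hQ, real_inner_comm]
  have huval : ∀ i : Fin (m + 2), u i = ∑ j : Fin (m + 2), (-1 : ℝ) ^ ((i : ℕ) + (j : ℕ)) *
      (Q.submatrix i.succAbove j.succAbove).det := by
    intro i
    have : u i = ∑ j, Q.adjugate i j := by
      simp [hu, Matrix.mulVec, dotProduct]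
    rw [this]
    refine Finset.sum_congr rfl fun j _ => ?_
    rw [Matrix.adjugate_fin_succ_eq_det_submatrix]
    rw [show ((j : ℕ) + i) = ((i : ℕ) + j) from Nat.add_comm _ _]
    congr 1
    rw [← Matrix.det_transpose, Matrix.transpose_submatrix, hQsymm]
  have hQu : Q *ᵥ u = fun _ => Q.det := by
    rw [hu, Matrix.mulVec_mulVec, Matrix.mul_adjugate, Matrix.smul_mulVec,
      Matrix.one_mulVec]
    funext i
    simp
  -- det Q • w = c • u
  have hzero : Q.det • w - c • u = 0 := by
    by_contra hne
    refine hdet (Matrix.exists_mulVec_eq_zero_iff.1 ⟨_, hne, ?_⟩)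
    rw [Matrix.mulVec_sub, Matrix.mulVec_smul, Matrix.mulVec_smul, hQwc, hQu]
    funext i
    simp [mul_comm]
  have hdw : ∀ i, Q.det * w i = c * u i := by
    intro i
    have h := congrFun hzero i
    simpa [sub_eq_zero] using h
  have hsumu : Q.det = c * ∑ i, u i := by
    have h : ∑ i, Q.det * w i = ∑ i, c * u i := Finset.sum_congr rfl fun i _ => hdw i
    rwa [← Finset.mul_sum, ← Finset.mul_sum, hw1, mul_one] at h
  have hcne : c ≠ 0 := fun h => hdet (by rw [hsumu, h, zero_mul])
  have hDne : (∑ i, u i) ≠ 0 := fun h => hdet (by rw [hsumu, h, mul_zero])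
  -- α = w
  have hαw : ∀ i, α i = w i := by
    intro i
    rw [hα i, ← huval i]
    have hden : (∑ j : Fin (m + 2), ∑ k : Fin (m + 2), (-1 : ℝ) ^ ((j : ℕ) + (k : ℕ)) *
        (Q.submatrix j.succAbove k.succAbove).det) = ∑ j, u j :=
      Finset.sum_congr rfl fun j _ => (huval j).symm
    rw [hden, div_eq_iff hDne]
    apply mul_left_cancel₀ hcne
    rw [← hdw i, hsumu]
    ring
  rw [hpsum]
  exact Finset.sum_congr rfl fun i _ => by rw [hαw i]
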